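/- Let H be a 3-uniform hypergraph with no linear cycle and let H' be obtained from H by adding two new vertices u, v and all hyperedges {u,v,x} for x ∈ V(H). Then H' contains no linear cycle. -/
import Mathlib


/-- A linear cycle of length `k ≥ 3` in a 3-uniform hypergraph with edge set `E`:
an alternating cyclic sequence of distinct vertices `v i` and distinct hyperedges `h i`
with `h i ∩ h (i+1) = {v (i+1)}` and non-consecutive hyperedges disjoint. -/
def IsLinearCycle {V : Type*} [DecidableEq V] (E : Finset (Finset V)) (k : ℕ)
    (v : ZMod k → V) (h : ZMod k → Finset V) : Prop :=
  3 ≤ k ∧ Function.Injective v ∧ Function.Injective h ∧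
    (∀ i, h i ∈ E) ∧ (∀ i, h i ∩ h (i + 1) = {v (i + 1)}) ∧
    (∀ i j, i ≠ j → i + 1 ≠ j → j + 1 ≠ i → h i ∩ h j = ∅)

/-- `E` contains a linear cycle. -/
def HasLinearCycle {V : Type*} [DecidableEq V] (E : Finset (Finset V)) : Prop :=
  ∃ (k : ℕ) (v : ZMod k → V) (h : ZMod k → Finset V), IsLinearCycle E k v h

/-- The degree of a vertex: the number of hyperedges containing it. -/
def hDegree {V : Type*} [DecidableEq V] (E : Finset (Finset V)) (v : V) : ℕ :=
  (E.filter (fun e => v ∈ e)).card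

/-- The support of a vertex `v` in a hyperedge `h`: the pairs of `h` that form a
hyperedge together with `v`. -/
def hSupport {V : Type*} [DecidableEq V] (E : Finset (Finset V)) (h : Finset V) (v : V) :
    Finset (Finset V) :=
  (h.powersetCard 2).filter (fun p => insert v p ∈ E)

/-- A pair of vertices is thick if at least two hyperedges contain it. -/
def ThickPair {V : Type*} [DecidableEq V] (E : Finset (Finset V)) (a b : V) : Prop :=
  2 ≤ (E.filter (fun e => a ∈ e ∧ b ∈ e)).card

/-- A hyperedge is thick if each of its pairs is contained in at least two hyperedges. -/
def ThickEdge {V : Type*} [DecidableEq V] (E : Finset (Finset V)) (h : Finset V) : Prop :=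
  ∀ p ∈ h.powersetCard 2, 2 ≤ (E.filter (fun e => p ⊆ e)).card

/-- `v ∉ h` is strongly associated to the hyperedge `h` if at least two of the 3-sets
formed by `v` and a pair of `h` are hyperedges. -/
def StronglyAssoc {V : Type*} [DecidableEq V] (E : Finset (Finset V)) (h : Finset V) (v : V) :
    Prop :=
  v ∉ h ∧ 2 ≤ (hSupport E h v).card

/-- A linear path of length `k` (given by its sequence of hyperedges): consecutive
hyperedges meet in exactly one vertex, non-consecutive ones are disjoint. -/
def IsLinearPath {V : Type*} [DecidableEq V] (E : Finset (Finset V)) (k : ℕ)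
    (h : Fin k → Finset V) : Prop :=
  Function.Injective h ∧ (∀ i, h i ∈ E) ∧
    (∀ i j : Fin k, (i : ℕ) + 1 = (j : ℕ) → (h i ∩ h j).card = 1) ∧
    (∀ i j : Fin k, (i : ℕ) + 2 ≤ (j : ℕ) → h i ∩ h j = ∅)

/-- A linear tree with vertex set `S` and edge set `T`: built from a single vertex by
repeatedly adding hyperedges meeting the current vertex set in exactly one vertex. -/
inductive IsLinearTree {V : Type*} [DecidableEq V] : Finset V → Finset (Finset V) → Prop
  | single (v : V) : IsLinearTree {v} ∅
  | extend {S : Finset V} {T : Finset (Finset V)} (e : Finset V) :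
      IsLinearTree S T → e.card = 3 → (e ∩ S).card = 1 → IsLinearTree (S ∪ e) (insert e T)

/-- Adding two new vertices `u, v` and all hyperedges `{u, v, x}` to a
linear-cycle-free hypergraph keeps it linear-cycle-free. -/
theorem add_universal_pair_cycle_free {V : Type*} [Fintype V] [DecidableEq V]
    (E : Finset (Finset V)) (h3 : ∀ e ∈ E, e.card = 3) (hcyc : ¬ HasLinearCycle E) :
    ¬ HasLinearCycle
      ((E.image (fun e => e.image Sum.inl)) ∪
        ((Finset.univ : Finset V).image
          (fun x => ({Sum.inl x, Sum.inr 0, Sum.inr 1} : Finset (V ⊕ Fin 2))))) := by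
  rintro ⟨k, v, h, hk, hvinj, hhinj, hmem, hcons, hdisj⟩
  have h10 : (Sum.inr (0 : Fin 2) : V ⊕ Fin 2) ≠ Sum.inr 1 := by
    intro hc; exact absurd (Sum.inr.inj hc) (by decide)
  have hone : (1 : ZMod k) ≠ 0 := by
    haveI : Fact (1 < k) := ⟨by omega⟩
    exact one_ne_zero
  have hchar : ∀ i, (∃ e ∈ E, h i = e.image Sum.inl) ∨
      (∃ x : V, h i = {Sum.inl x, Sum.inr 0, Sum.inr 1}) := by
    intro i
    have := hmem i
    simp only [Finset.mem_union, Finset.mem_image, Finset.mem_univ, true_and] at this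
    rcases this with ⟨e, he, heq⟩ | ⟨x, hx⟩
    · exact Or.inl ⟨e, he, heq.symm⟩
    · exact Or.inr ⟨x, hx.symm⟩
  -- no two distinct "new" edges
  have key : ∀ i j : ZMod k, i ≠ j →
      Sum.inr (0:Fin 2) ∈ h i → Sum.inr (1:Fin 2) ∈ h i →
      Sum.inr (0:Fin 2) ∈ h j → Sum.inr (1:Fin 2) ∈ h j → False := by
    intro i j hij hi0 hi1 hj0 hj1
    by_cases hc1 : i + 1 = j
    · have := hcons i
      rw [hc1] at this
      have m0 : (Sum.inr (0:Fin 2) : V ⊕ Fin 2) ∈ ({v j} : Finset (V ⊕ Fin 2)) := by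
        rw [← this]; exact Finset.mem_inter.2 ⟨hi0, hj0⟩
      have m1 : (Sum.inr (1:Fin 2) : V ⊕ Fin 2) ∈ ({v j} : Finset (V ⊕ Fin 2)) := by
        rw [← this]; exact Finset.mem_inter.2 ⟨hi1, hj1⟩
      exact h10 ((Finset.mem_singleton.1 m0).trans (Finset.mem_singleton.1 m1).symm)
    · by_cases hc2 : j + 1 = i
      · have := hcons j
        rw [hc2] at this
        have m0 : (Sum.inr (0:Fin 2) : V ⊕ Fin 2) ∈ ({v i} : Finset (V ⊕ Fin 2)) := by
          rw [← this]; exact Finset.mem_inter.2 ⟨hj0, hi0⟩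
        have m1 : (Sum.inr (1:Fin 2) : V ⊕ Fin 2) ∈ ({v i} : Finset (V ⊕ Fin 2)) := by
          rw [← this]; exact Finset.mem_inter.2 ⟨hj1, hi1⟩
        exact h10 ((Finset.mem_singleton.1 m0).trans (Finset.mem_singleton.1 m1).symm)
      · have := hdisj i j hij hc1 hc2
        have : (Sum.inr (0:Fin 2) : V ⊕ Fin 2) ∈ (∅ : Finset (V ⊕ Fin 2)) := by
          rw [← this]; exact Finset.mem_inter.2 ⟨hi0, hj0⟩
        simp at this
  by_cases hall : ∀ i, ∃ e ∈ E, h i = e.image Sum.inl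
  · -- all edges old: pull back the cycle to E
    choose e hemem heq using hall
    have hv : ∀ i, v i ∈ h i := by
      intro i
      have hc := hcons (i - 1)
      have hi : i - 1 + 1 = i := by ring
      rw [hi] at hc
      have : v i ∈ h (i - 1) ∩ h i := by rw [hc]; exact Finset.mem_singleton_self _
      exact (Finset.mem_inter.1 this).2
    have hv' : ∀ i, ∃ w, v i = Sum.inl w ∧ w ∈ e i := by
      intro i
      have := hv i
      rw [heq i] at this
      rcases Finset.mem_image.1 this with ⟨w, hw, hweq⟩
      exact ⟨w, hweq.symm, hw⟩
    choose w hw hwmem using hv'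
    apply hcyc
    refine ⟨k, w, e, hk, ?_, ?_, hemem, ?_, ?_⟩
    · intro a b hab
      exact hvinj (by rw [hw a, hw b, hab])
    · intro a b hab
      exact hhinj (by rw [heq a, heq b, hab])
    · intro i
      apply Finset.image_injective (f := (Sum.inl : V → V ⊕ Fin 2)) Sum.inl_injective
      rw [Finset.image_inter _ _ Sum.inl_injective, ← heq, ← heq, hcons,
        Finset.image_singleton, ← hw]
    · intro i j hij h1 h2
      have := hdisj i j hij h1 h2
      rw [heq i, heq j, ← Finset.image_inter _ _ Sum.inl_injective,
        Finset.image_eq_empty] at this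
      exact this
  · -- there is a new edge h i0 = {inl x, inr 0, inr 1}
    push_neg at hall
    obtain ⟨i0, hi0⟩ := hall
    obtain ⟨x, hx⟩ := (hchar i0).resolve_left (by
      intro ⟨e, he, heq⟩
      exact absurd he (by simpa [heq] using hi0 e))
    have hold : ∀ j, j ≠ i0 → ∃ e ∈ E, h j = e.image Sum.inl := by
      intro j hj
      rcases hchar j with hA | ⟨y, hy⟩
      · exact hA
      · exact absurd (key i0 j (Ne.symm hj)
          (by rw [hx]; simp) (by rw [hx]; simp)
          (by rw [hy]; simp) (by rw [hy]; simp)) (fun f => f)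
    have hne1 : i0 + 1 ≠ i0 := by
      intro hc; exact hone (by linear_combination hc)
    have hne2 : i0 - 1 ≠ i0 := by
      intro hc; apply hone; linear_combination -hc
    -- v (i0+1) = inl x
    obtain ⟨e1, he1, heq1⟩ := hold (i0 + 1) hne1
    obtain ⟨e2, he2, heq2⟩ := hold (i0 - 1) hne2
    have hm1 : v (i0 + 1) ∈ h i0 ∩ h (i0 + 1) := by
      rw [hcons i0]; exact Finset.mem_singleton_self _
    have hm2 : v i0 ∈ h (i0 - 1) ∩ h i0 := by
      have hc := hcons (i0 - 1)
      have hi : i0 - 1 + 1 = i0 := by ring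
      rw [hi] at hc
      rw [hc]; exact Finset.mem_singleton_self _
    have hvx1 : v (i0 + 1) = Sum.inl x := by
      have h1 := (Finset.mem_inter.1 hm1).1
      have h2 := (Finset.mem_inter.1 hm1).2
      rw [heq1] at h2
      rcases Finset.mem_image.1 h2 with ⟨a, _, ha⟩
      rw [hx] at h1
      simp only [Finset.mem_insert, Finset.mem_singleton] at h1
      rcases h1 with h1 | h1 | h1
      · exact h1
      · exact absurd (ha.trans h1) (by simp)
      · exact absurd (ha.trans h1) (by simp)
    have hvx2 : v i0 = Sum.inl x := by
      have h1 := (Finset.mem_inter.1 hm2).2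
      have h2 := (Finset.mem_inter.1 hm2).1
      rw [heq2] at h2
      rcases Finset.mem_image.1 h2 with ⟨a, _, ha⟩
      rw [hx] at h1
      simp only [Finset.mem_insert, Finset.mem_singleton] at h1
      rcases h1 with h1 | h1 | h1
      · exact h1
      · exact absurd (ha.trans h1) (by simp)
      · exact absurd (ha.trans h1) (by simp)
    have := hvinj (hvx2.trans hvx1.symm)
    exact hne1 this.symm
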